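/- Let (Ω, F, μ) be a probability space with a filtration 𝒻 indexed by ℕ, T a finite horizon, and Z : ℕ → Ω → ℝ an adapted process with each Z t bounded and measurable. Let U be the Snell envelope of Z. Fix t ≤ T and define τ*(ω) = min{s | t ≤ s ≤ T and U s ω = Z s ω} (this set is nonempty since U T = Z T). Then τ* is a stopping time with respect to 𝒻, t ≤ τ* ≤ T, and μ[Z_{τ*} | 𝒻 t] = U t almost everywhere; in particular τ* attains the supremum of μ[Z_τ | 𝒻 t] over all stopping times τ with t ≤ τ ≤ T. -/

import Mathlib

open MeasureTheory


lemma isStoppingTime_min_nat {Ω : Type*} {mΩ : MeasurableSpace Ω} {𝒻 : Filtration ℕ mΩ}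
    {τ : Ω → ℕ} (hτ : IsStoppingTime 𝒻 (fun ω => (τ ω : WithTop ℕ))) (s : ℕ) :
    IsStoppingTime 𝒻 (fun ω => ((min (τ ω) s : ℕ) : WithTop ℕ)) := by
  have h : (fun ω => ((min (τ ω) s : ℕ) : WithTop ℕ)) = fun ω => min ((τ ω : WithTop ℕ)) s :=
    funext fun ω => WithTop.coe_min _ _
  rw [h]; exact hτ.min_const s

lemma untopA_coe_nat (x : ℕ) : (x : WithTop ℕ).untopA = x := rfl

lemma snell_tower_le {Ω : Type*} {mΩ : MeasurableSpace Ω} {μ : Measure Ω} [IsFiniteMeasure μ]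
    (𝒻 : Filtration ℕ mΩ) (W : ℕ → Ω → ℝ)
    (hint : ∀ s, Integrable (W s) μ)
    (hm : ∀ s, StronglyMeasurable[𝒻 s] (W s))
    (t T : ℕ)
    (hstep : ∀ s, t ≤ s → s < T → μ[W (s+1)|𝒻 s] ≤ᵐ[μ] W s) :
    ∀ k s, t ≤ s → s + k ≤ T → μ[W (s+k)|𝒻 s] ≤ᵐ[μ] W s := by
  intro k
  induction k with
  | zero =>
    intro s _ _
    simp only [Nat.add_zero]
    rw [condExp_of_stronglyMeasurable (𝒻.le s) (hm s) (hint s)]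
  | succ k ih =>
    intro s hts hsT
    have h1 : μ[W (s + (k+1))|𝒻 s] =ᵐ[μ] μ[μ[W (s + (k+1))|𝒻 (s+1)]|𝒻 s] :=
      (condExp_condExp_of_le (𝒻.mono (Nat.le_succ s)) (𝒻.le (s+1))).symm
    have h2 : μ[W (s + (k+1))|𝒻 (s+1)] ≤ᵐ[μ] W (s+1) := by
      have := ih (s+1) (by omega) (by omega)
      simpa [show s + 1 + k = s + (k+1) by omega] using this
    have h3 : μ[μ[W (s + (k+1))|𝒻 (s+1)]|𝒻 s] ≤ᵐ[μ] μ[W (s+1)|𝒻 s] :=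
      condExp_mono integrable_condExp (hint (s+1)) h2
    exact h1.trans_le (h3.trans (hstep s hts (by omega)))

lemma snell_tower_eq {Ω : Type*} {mΩ : MeasurableSpace Ω} {μ : Measure Ω} [IsFiniteMeasure μ]
    (𝒻 : Filtration ℕ mΩ) (W : ℕ → Ω → ℝ)
    (hint : ∀ s, Integrable (W s) μ)
    (hm : ∀ s, StronglyMeasurable[𝒻 s] (W s))
    (t T : ℕ)
    (hstep : ∀ s, t ≤ s → s < T → μ[W (s+1)|𝒻 s] =ᵐ[μ] W s) :
    ∀ k s, t ≤ s → s + k ≤ T → μ[W (s+k)|𝒻 s] =ᵐ[μ] W s := by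
  intro k
  induction k with
  | zero =>
    intro s _ _
    simp only [Nat.add_zero]
    rw [condExp_of_stronglyMeasurable (𝒻.le s) (hm s) (hint s)]
  | succ k ih =>
    intro s hts hsT
    have h1 : μ[W (s + (k+1))|𝒻 s] =ᵐ[μ] μ[μ[W (s + (k+1))|𝒻 (s+1)]|𝒻 s] :=
      (condExp_condExp_of_le (𝒻.mono (Nat.le_succ s)) (𝒻.le (s+1))).symm
    have h2 : μ[W (s + (k+1))|𝒻 (s+1)] =ᵐ[μ] W (s+1) := by
      have := ih (s+1) (by omega) (by omega)
      simpa [show s + 1 + k = s + (k+1) by omega] using this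
    have h3 : μ[μ[W (s + (k+1))|𝒻 (s+1)]|𝒻 s] =ᵐ[μ] μ[W (s+1)|𝒻 s] :=
      condExp_congr_ae h2
    exact (h1.trans h3).trans (hstep s hts (by omega))

lemma snell_stopped_step {Ω : Type*} {mΩ : MeasurableSpace Ω} {μ : Measure Ω}
    [IsProbabilityMeasure μ] (𝒻 : Filtration ℕ mΩ) (U' : ℕ → Ω → ℝ)
    (hU'int : ∀ s, Integrable (U' s) μ) (hU'ad : StronglyAdapted 𝒻 U')
    (τ : Ω → ℕ) (hτ : IsStoppingTime 𝒻 (fun ω => (τ ω : WithTop ℕ))) (s : ℕ) :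
    μ[(fun ω => U' (min (τ ω) (s+1)) ω)|𝒻 s] =ᵐ[μ]
      fun ω => U' (min (τ ω) s) ω + Set.indicator {ω' | s < τ ω'}
        (fun ω' => (μ[U' (s+1)|𝒻 s]) ω' - U' s ω') ω := by
  have hsetm : MeasurableSet[𝒻 s] {ω | s < τ ω} := by
    have : {ω | s < τ ω} = {ω | τ ω ≤ s}ᶜ := by ext ω; simp [not_le]
    have h : MeasurableSet[𝒻 s] {ω | τ ω ≤ s} := by
      convert hτ s using 1; ext ω
      show τ ω ≤ s ↔ ((τ ω : ℕ) : WithTop ℕ) ≤ (s : WithTop ℕ)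
      exact WithTop.coe_le_coe.symm
    rw [this]; exact h.compl
  have hVm : StronglyMeasurable[𝒻 s] (stoppedValue U' (fun ω => ((min (τ ω) s : ℕ) : WithTop ℕ))) :=
    stronglyMeasurable_stoppedValue_of_le hU'ad.isStronglyProgressive_of_discrete
      (isStoppingTime_min_nat hτ s) (fun ω => WithTop.coe_le_coe.mpr (min_le_right _ _))
  have hVint : Integrable (stoppedValue U' (fun ω => ((min (τ ω) s : ℕ) : WithTop ℕ))) μ :=
    integrable_stoppedValue ℕ (isStoppingTime_min_nat hτ s) hU'int
      (fun ω => WithTop.coe_le_coe.mpr (min_le_right _ _))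
  have hsub : Integrable (fun ω => U' (s+1) ω - U' s ω) μ := (hU'int (s+1)).sub (hU'int s)
  have hind : Integrable (Set.indicator {ω' | s < τ ω'} (fun ω => U' (s+1) ω - U' s ω)) μ :=
    hsub.indicator (𝒻.le s _ hsetm)
  have hdec : (fun ω => U' (min (τ ω) (s+1)) ω) =
      fun ω => stoppedValue U' (fun ω => ((min (τ ω) s : ℕ) : WithTop ℕ)) ω +
        Set.indicator {ω' | s < τ ω'} (fun ω' => U' (s+1) ω' - U' s ω') ω := by
    funext ω
    by_cases h : s < τ ω
    · simp only [stoppedValue, Set.indicator_apply, Set.mem_setOf_eq, if_pos h, untopA_coe_nat]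
      rw [min_eq_right (by omega : s ≤ τ ω), min_eq_right (by omega : (s+1) ≤ τ ω)]
      ring
    · simp only [stoppedValue, Set.indicator_apply, Set.mem_setOf_eq, if_neg h, untopA_coe_nat]
      rw [min_eq_left (by omega : τ ω ≤ s), min_eq_left (by omega : τ ω ≤ s+1), add_zero]
  rw [hdec]
  have h1 := condExp_add (μ := μ) (m := 𝒻 s) hVint hind
  refine h1.trans ?_
  have h2 : μ[stoppedValue U' (fun ω => ((min (τ ω) s : ℕ) : WithTop ℕ))|𝒻 s] =
      stoppedValue U' (fun ω => ((min (τ ω) s : ℕ) : WithTop ℕ)) :=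
    condExp_of_stronglyMeasurable (𝒻.le s) hVm hVint
  have h3 : μ[Set.indicator {ω' | s < τ ω'} (fun ω => U' (s+1) ω - U' s ω)|𝒻 s] =ᵐ[μ]
      Set.indicator {ω' | s < τ ω'} (μ[(fun ω => U' (s+1) ω - U' s ω)|𝒻 s]) :=
    condExp_indicator hsub hsetm
  have h4 : μ[(fun ω => U' (s+1) ω - U' s ω)|𝒻 s] =ᵐ[μ]
      fun ω => (μ[U' (s+1)|𝒻 s]) ω - U' s ω := by
    refine (condExp_sub (hU'int (s+1)) (hU'int s) (𝒻 s)).trans ?_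
    rw [condExp_of_stronglyMeasurable (𝒻.le s) (hU'ad s) (hU'int s)]
    exact Filter.EventuallyEq.refl _ _
  have h5 : Set.indicator {ω' | s < τ ω'} (μ[(fun ω => U' (s+1) ω - U' s ω)|𝒻 s]) =ᵐ[μ]
      Set.indicator {ω' | s < τ ω'} (fun ω => (μ[U' (s+1)|𝒻 s]) ω - U' s ω) := by
    filter_upwards [h4] with ω hω
    simp only [Set.indicator_apply, Set.mem_setOf_eq, hω]
  rw [h2]
  filter_upwards [h3, h5] with ω hω3 hω5
  simp only [Pi.add_apply, hω3, hω5]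
  rfl


/-- The first time the payoff touches the Snell envelope after `t` is a stopping time, lies in
`[t, T]`, and its conditional expected payoff attains the Snell envelope `U t`; in particular it
attains the supremum of conditional expected payoffs over stopping times valued in `[t, T]`. -/
theorem stmt5 {Ω : Type*} {mΩ : MeasurableSpace Ω} {μ : Measure Ω} [IsProbabilityMeasure μ]
    (𝒻 : Filtration ℕ mΩ) (T : ℕ) (Z : ℕ → Ω → ℝ)
    (hadapt : Adapted 𝒻 Z)
    (hmeas : ∀ t, Measurable (Z t))
    (hbdd : ∀ t, ∃ C : ℝ, ∀ ω, |Z t ω| ≤ C)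
    (U : ℕ → Ω → ℝ)
    (hUT : U T = Z T)
    (hU : ∀ t < T, U t = fun ω => max (Z t ω) ((μ[U (t + 1) | 𝒻 t]) ω))
    (t : ℕ) (ht : t ≤ T)
    (τstar : Ω → ℕ)
    (hτstar : ∀ ω, τstar ω = sInf {s : ℕ | t ≤ s ∧ s ≤ T ∧ U s ω = Z s ω}) :
    IsStoppingTime 𝒻 (fun ω => (τstar ω : WithTop ℕ)) ∧
    (∀ ω, t ≤ τstar ω ∧ τstar ω ≤ T) ∧
    (μ[fun ω' => Z (τstar ω') ω' | 𝒻 t] =ᵐ[μ] U t) ∧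
    (∀ τ : Ω → ℕ, IsStoppingTime 𝒻 (fun ω => (τ ω : WithTop ℕ)) → (∀ ω, t ≤ τ ω) → (∀ ω, τ ω ≤ T) →
      ∀ᵐ ω ∂μ, (μ[fun ω' => Z (τ ω') ω' | 𝒻 t]) ω ≤
        (μ[fun ω' => Z (τstar ω') ω' | 𝒻 t]) ω) := by
  -- integrability of each `Z s`
  have hZint : ∀ s, Integrable (Z s) μ := by
    intro s
    obtain ⟨C, hC⟩ := hbdd s
    exact (integrable_const C).mono' (hmeas s).aestronglyMeasurable
      (Filter.Eventually.of_forall fun ω => by simpa [Real.norm_eq_abs] using hC ω)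
  -- measurability and integrability of the Snell envelope
  have hUprop : ∀ k s, s + k = T → StronglyMeasurable[𝒻 s] (U s) ∧ Integrable (U s) μ := by
    intro k
    induction k with
    | zero =>
      intro s hs
      have : s = T := by omega
      subst this
      rw [hUT]
      exact ⟨(hadapt s).stronglyMeasurable, hZint s⟩
    | succ k ih =>
      intro s hs
      have hsT : s < T := by omega
      have hmax := hU s hsT
      have hcondint : Integrable (μ[U (s+1)|𝒻 s]) μ := integrable_condExp
      constructor
      · rw [hmax]
        exact @MeasureTheory.StronglyMeasurable.sup Ω ℝ _ _ (𝒻 s) _ _ _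
          (hadapt s).stronglyMeasurable stronglyMeasurable_condExp
      · rw [hmax]
        have := (hZint s).sup hcondint
        simpa [Pi.sup_def] using this
  -- pointwise bounds from the recursion
  have hUZ : ∀ s, s ≤ T → ∀ ω, Z s ω ≤ U s ω := by
    intro s hs ω
    rcases eq_or_lt_of_le hs with h | h
    · subst h; rw [hUT]
    · rw [hU s h]; exact le_max_left _ _
  have hUE : ∀ s, s < T → ∀ ω, (μ[U (s+1)|𝒻 s]) ω ≤ U s ω := by
    intro s h ω
    rw [hU s h]; exact le_max_right _ _
  -- τstar is a member of the hitting set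
  have hmemS : ∀ ω, t ≤ τstar ω ∧ τstar ω ≤ T ∧ U (τstar ω) ω = Z (τstar ω) ω := by
    intro ω
    have hmem : τstar ω ∈ {s : ℕ | t ≤ s ∧ s ≤ T ∧ U s ω = Z s ω} := by
      rw [hτstar ω]
      have hne : {s : ℕ | t ≤ s ∧ s ≤ T ∧ U s ω = Z s ω}.Nonempty :=
        ⟨T, ht, le_rfl, congrFun hUT ω⟩
      exact Nat.sInf_mem hne
    exact hmem
  -- τstar is a stopping time
  have hstop : IsStoppingTime 𝒻 (fun ω => (τstar ω : WithTop ℕ)) := by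
    intro s
    suffices hkey : MeasurableSet[𝒻 s] {ω | τstar ω ≤ s} by
      convert hkey using 1; ext ω; exact WithTop.coe_le_coe
    have hset : {ω | τstar ω ≤ s} =
        ⋃ r ∈ Finset.Iic s, {ω | t ≤ r ∧ r ≤ T ∧ U r ω = Z r ω} := by
      ext ω
      simp only [Set.mem_setOf_eq, Set.mem_iUnion, Finset.mem_Iic, exists_prop,
        Finset.mem_coe]
      constructor
      · intro h
        exact ⟨τstar ω, h, (hmemS ω).1, (hmemS ω).2.1, (hmemS ω).2.2⟩
      · rintro ⟨r, hr, hrS⟩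
        rw [hτstar ω]
        exact le_trans (Nat.sInf_le hrS) hr
    rw [hset]
    refine MeasurableSet.biUnion (Finset.Iic s).countable_toSet fun r hr => ?_
    have hrs : r ≤ s := Finset.mem_Iic.mp hr
    by_cases hcond : t ≤ r ∧ r ≤ T
    · have hUm : StronglyMeasurable[𝒻 r] (U r) := (hUprop (T - r) r (by omega)).1
      have : {ω | t ≤ r ∧ r ≤ T ∧ U r ω = Z r ω} = {ω | U r ω = Z r ω} := by
        ext ω; simp [hcond.1, hcond.2]
      rw [this]
      have h1 : Measurable[𝒻 r] (U r) := hUm.measurable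
      have h2 : Measurable[𝒻 r] (Z r) := hadapt r
      exact 𝒻.mono hrs _ (measurableSet_eq_fun h1 h2)
    · have : {ω | t ≤ r ∧ r ≤ T ∧ U r ω = Z r ω} = ∅ := by
        ext ω; simp only [Set.mem_setOf_eq, Set.mem_empty_iff_false, iff_false]
        intro hc; exact hcond ⟨hc.1, hc.2.1⟩
      rw [this]; exact @MeasurableSet.empty Ω (𝒻 s)
  -- the truncated envelope, adapted at all times
  set U' : ℕ → Ω → ℝ := fun s => U (min s T) with hU'def
  have hU'ad : StronglyAdapted 𝒻 U' := by
    intro s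
    exact ((hUprop (T - min s T) (min s T) (by omega)).1).mono (𝒻.mono (min_le_left s T))
  have hU'int : ∀ s, Integrable (U' s) μ := by
    intro s
    exact (hUprop (T - min s T) (min s T) (by omega)).2
  -- stopped-process facts, for any stopping time
  have Vint : ∀ (τ : Ω → ℕ), IsStoppingTime 𝒻 (fun ω => (τ ω : WithTop ℕ)) → ∀ s : ℕ,
      Integrable (fun ω => U' (min (τ ω) s) ω) μ := by
    intro τ hτ s
    exact integrable_stoppedValue (ι := ℕ) (u := U') (isStoppingTime_min_nat hτ s) hU'int
      (fun ω => WithTop.coe_le_coe.mpr (min_le_right _ _))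
  have Vm : ∀ (τ : Ω → ℕ), IsStoppingTime 𝒻 (fun ω => (τ ω : WithTop ℕ)) → ∀ s : ℕ,
      StronglyMeasurable[𝒻 s] (fun ω => U' (min (τ ω) s) ω) := by
    intro τ hτ s
    exact stronglyMeasurable_stoppedValue_of_le (f := 𝒻) (u := U')
      hU'ad.isStronglyProgressive_of_discrete (isStoppingTime_min_nat hτ s)
      (fun ω => WithTop.coe_le_coe.mpr (min_le_right _ _))
  -- identification of endpoints of the stopped process
  have eT : ∀ (τ : Ω → ℕ), (∀ ω, τ ω ≤ T) →
      (fun ω => U' (min (τ ω) (t + (T - t))) ω) = fun ω => U (τ ω) ω := by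
    intro τ hτT
    funext ω
    have h1 : t + (T - t) = T := by omega
    rw [h1, min_eq_left (hτT ω)]
    simp only [hU'def, min_eq_left (hτT ω)]
  have et : ∀ (τ : Ω → ℕ), (∀ ω, t ≤ τ ω) →
      (fun ω => U' (min (τ ω) t) ω) = U t := by
    intro τ hτt
    funext ω
    rw [min_eq_right (hτt ω)]
    simp only [hU'def, min_eq_left ht]
  -- supermartingale property of the stopped envelope: the general bound
  have tower_le_app : ∀ τ : Ω → ℕ, IsStoppingTime 𝒻 (fun ω => (τ ω : WithTop ℕ)) → (∀ ω, t ≤ τ ω) → (∀ ω, τ ω ≤ T) →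
      μ[(fun ω => U (τ ω) ω)|𝒻 t] ≤ᵐ[μ] U t := by
    intro τ hτ hτt hτT
    have hstep : ∀ s, t ≤ s → s < T →
        μ[(fun ω => U' (min (τ ω) (s+1)) ω)|𝒻 s] ≤ᵐ[μ] fun ω => U' (min (τ ω) s) ω := by
      intro s hts hsT
      refine (snell_stopped_step 𝒻 U' hU'int hU'ad τ hτ s).trans_le ?_
      refine Filter.Eventually.of_forall fun ω => ?_
      have hind : Set.indicator {ω' | s < τ ω'}
          (fun ω' => (μ[U' (s+1)|𝒻 s]) ω' - U' s ω') ω ≤ 0 := by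
        by_cases h : s < τ ω
        · simp only [Set.indicator_apply, Set.mem_setOf_eq, if_pos h]
          have hs1 : U' (s+1) = U (s+1) := by
            simp only [hU'def, min_eq_left (by omega : s + 1 ≤ T)]
          have hs0 : U' s = U s := by
            simp only [hU'def, min_eq_left (by omega : s ≤ T)]
          rw [hs1, hs0, sub_nonpos]
          exact hUE s hsT ω
        · simp only [Set.indicator_apply, Set.mem_setOf_eq, if_neg h, le_refl]
      show U' (min (τ ω) s) ω + _ ≤ U' (min (τ ω) s) ω
      exact add_le_of_nonpos_right hind
    have := snell_tower_le 𝒻 (fun s ω => U' (min (τ ω) s) ω) (Vint τ hτ) (Vm τ hτ)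
      t T hstep (T - t) t le_rfl (by omega)
    simpa only [eT τ hτT, et τ hτt] using this
  -- martingale property of the envelope stopped at τstar
  have tower_eq_app : μ[(fun ω => U (τstar ω) ω)|𝒻 t] =ᵐ[μ] U t := by
    have hstep : ∀ s, t ≤ s → s < T →
        μ[(fun ω => U' (min (τstar ω) (s+1)) ω)|𝒻 s] =ᵐ[μ] fun ω => U' (min (τstar ω) s) ω := by
      intro s hts hsT
      refine (snell_stopped_step 𝒻 U' hU'int hU'ad τstar hstop s).trans ?_
      refine Filter.Eventually.of_forall fun ω => ?_
      have hind : Set.indicator {ω' | s < τstar ω'}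
          (fun ω' => (μ[U' (s+1)|𝒻 s]) ω' - U' s ω') ω = 0 := by
        by_cases h : s < τstar ω
        · simp only [Set.indicator_apply, Set.mem_setOf_eq, if_pos h]
          have hs1 : U' (s+1) = U (s+1) := by
            simp only [hU'def, min_eq_left (by omega : s + 1 ≤ T)]
          have hs0 : U' s = U s := by
            simp only [hU'def, min_eq_left (by omega : s ≤ T)]
          rw [hs1, hs0, sub_eq_zero]
          -- since τstar ω > s, U s ω ≠ Z s ω, hence the max is the conditional expectation
          have hnot : ¬ (t ≤ s ∧ s ≤ T ∧ U s ω = Z s ω) := by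
            intro hc
            have hle : τstar ω ≤ s := by rw [hτstar ω]; exact Nat.sInf_le hc
            omega
          have hne : U s ω ≠ Z s ω := fun h' => hnot ⟨hts, by omega, h'⟩
          have hmaxeq := congrFun (hU s hsT) ω
          rcases le_total (Z s ω) ((μ[U (s+1)|𝒻 s]) ω) with hle | hle
          · rw [hmaxeq, max_eq_right hle]
          · exfalso; exact hne (by rw [hmaxeq, max_eq_left hle])
        · simp only [Set.indicator_apply, Set.mem_setOf_eq, if_neg h]
      simp only [hind, add_zero]
    have := snell_tower_eq 𝒻 (fun s ω => U' (min (τstar ω) s) ω) (Vint τstar hstop)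
      (Vm τstar hstop) t T hstep (T - t) t le_rfl (by omega)
    simpa only [eT τstar (fun ω => (hmemS ω).2.1), et τstar (fun ω => (hmemS ω).1)] using this
  -- third claim
  have hthird : μ[(fun ω' => Z (τstar ω') ω')|𝒻 t] =ᵐ[μ] U t := by
    have hfun : (fun ω => U (τstar ω) ω) = fun ω' => Z (τstar ω') ω' :=
      funext fun ω => (hmemS ω).2.2
    rw [← hfun]
    exact tower_eq_app
  refine ⟨hstop, fun ω => ⟨(hmemS ω).1, (hmemS ω).2.1⟩, hthird, ?_⟩
  -- fourth claim
  intro τ hτ hτt hτT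
  have hZτint : Integrable (fun ω => Z (τ ω) ω) μ :=
    integrable_stoppedValue ℕ hτ hZint (fun ω => WithTop.coe_le_coe.mpr (hτT ω))
  have hUτint : Integrable (fun ω => U (τ ω) ω) μ := by
    have := Vint τ hτ (t + (T - t))
    rwa [eT τ hτT] at this
  have h1 : μ[(fun ω => Z (τ ω) ω)|𝒻 t] ≤ᵐ[μ] μ[(fun ω => U (τ ω) ω)|𝒻 t] :=
    condExp_mono hZτint hUτint
      (Filter.Eventually.of_forall fun ω => hUZ (τ ω) (hτT ω) ω)
  have h2 := tower_le_app τ hτ hτt hτT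
  filter_upwards [h1, h2, hthird] with ω hω1 hω2 hω3
  calc (μ[fun ω' => Z (τ ω') ω'|𝒻 t]) ω ≤ (μ[fun ω' => U (τ ω') ω'|𝒻 t]) ω := hω1
    _ ≤ U t ω := hω2
    _ = (μ[fun ω' => Z (τstar ω') ω'|𝒻 t]) ω := hω3.symm
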